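/- arXiv:2604.13395 — 2 statements merged into one kernel-verified Lean document; each statement's English description precedes it below -/
import Mathlib

section
/- Split conformal coverage: Let s_1, …, s_n, s_{n+1} be exchangeable real-valued random variables (nonconformity scores). Define q̂ as the ⌈(1−α)(n+1)⌉-th smallest value among s_1,…,s_n (equivalently the (1−α)-quantile of the multiset {s_1,…,s_n} ∪ {∞}). Then Pr(s_{n+1} ≤ q̂) ≥ 1 − α. -/
open MeasureTheory ProbabilityTheory Finset
open scoped ENNReal

/-- The `⌈(1−α)(n+1)⌉`-th smallest value of the scores `xs` (equivalently, the
`(1−α)`-quantile of the multiset `{xs} ∪ {∞}`, where exceeding the sample size gives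
`∞`, represented in `EReal`). -/
noncomputable def conformalQuantile (n : ℕ) (α : ℝ) (xs : Fin n → ℝ) : EReal :=
  (((Multiset.ofList (List.ofFn xs)).sort (· ≤ ·)).map (fun x : ℝ => (x : EReal))).getD
    (⌈(1 - α) * (n + 1 : ℝ)⌉.toNat - 1) ⊤

/-- card of a filter is invariant under reindexing by a permutation. -/
lemma card_filter_comp_equiv' {β : Type*} [Fintype β]
    (e : Equiv.Perm β) (p : β → Prop) [DecidablePred p] :
    (univ.filter fun j => p (e j)).card = (univ.filter p).card := by
  refine Finset.card_bij (fun j _ => e j) ?_ ?_ ?_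
  · intro a ha; simp only [mem_filter, mem_univ, true_and] at ha ⊢; exact ha
  · intro a _ b _ h; exact e.injective h
  · intro b hb
    refine ⟨e.symm b, ?_, by simp⟩
    simp only [mem_filter, mem_univ, true_and, Equiv.apply_symm_apply] at hb ⊢
    exact hb

open Classical in
lemma monotone_rank {n : ℕ} {g : Fin n → ℝ} (hg : Monotone g) (m : Fin n) (y : ℝ) :
    y ≤ g m ↔ (univ.filter fun i => g i < y).card ≤ (m : ℕ) := by
  constructor
  · intro h
    have hsub : (univ.filter fun i => g i < y) ⊆ Finset.Iio m := by
      intro i hi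
      simp only [mem_filter, mem_univ, true_and] at hi
      rw [Finset.mem_Iio]
      by_contra hc
      exact absurd (h.trans (hg (not_lt.mp hc))) (not_le.mpr hi)
    simpa [Fin.card_Iio] using Finset.card_le_card hsub
  · contrapose!
    intro h
    have hsub : Finset.Iic m ⊆ (univ.filter fun i => g i < y) := by
      intro i hi
      rw [Finset.mem_Iic] at hi
      simp only [mem_filter, mem_univ, true_and]
      exact lt_of_le_of_lt (hg hi) h
    have := Finset.card_le_card hsub
    simp only [Fin.card_Iic] at this
    omega

lemma sort_ofFn_eq {n : ℕ} (xs : Fin n → ℝ) :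
    (Multiset.ofList (List.ofFn xs)).sort (· ≤ ·) =
      List.ofFn (xs ∘ Tuple.sort xs) := by
  refine (fun hp h1 h2 => List.Perm.eq_of_pairwise' (r := (· ≤ · : ℝ → ℝ → Prop)) h1 h2 hp) ?_ ?_ ?_
  · exact (Multiset.coe_eq_coe.mp (Multiset.sort_eq _ _)).trans
      ((Tuple.sort xs).ofFn_comp_perm xs).symm
  · exact Multiset.pairwise_sort _ _
  · exact (Tuple.monotone_sort xs).sortedLE_ofFn.pairwise

open Classical in
lemma rank_count {N : ℕ} (x : Fin N → ℝ) (k : ℕ) (hk : k ≤ N) :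
    k ≤ (univ.filter fun j : Fin N =>
        (univ.filter fun i => x i < x j).card < k).card := by
  set e : Fin N → ℝ ×ₗ (Fin N) := fun j => toLex (x j, j) with he
  set g : Fin N → ℕ := fun j => (univ.filter fun i => e i < e j).card with hg
  have hglt : ∀ j, g j < N := by
    intro j
    have hsub : (univ.filter fun i => e i < e j) ⊆ univ.erase j := by
      intro i hi
      simp only [mem_filter, mem_univ, true_and] at hi
      exact Finset.mem_erase.mpr ⟨fun h => absurd hi (h ▸ lt_irrefl _), Finset.mem_univ i⟩
    have := Finset.card_le_card hsub
    have hN : 0 < N := j.pos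
    have hgj : g j = (univ.filter fun i => e i < e j).card := rfl
    simp only [Finset.card_erase_of_mem (Finset.mem_univ j), card_univ, Fintype.card_fin] at this
    omega
  have hmono : ∀ j j' : Fin N, e j < e j' → g j < g j' := by
    intro j j' hjj'
    apply Finset.card_lt_card
    constructor
    · intro i hi
      simp only [mem_filter, mem_univ, true_and] at hi ⊢
      exact hi.trans hjj'
    · intro hcon
      have hj : j ∈ univ.filter fun i => e i < e j' := by
        simp only [mem_filter, mem_univ, true_and]; exact hjj'
      have := hcon hj
      simp only [mem_filter, mem_univ, true_and] at this
      exact absurd this (lt_irrefl _)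
  have heinj : Function.Injective e := by
    intro a b hab
    have := congrArg (fun p => (ofLex p).2) hab
    simpa [he] using this
  set G : Fin N → Fin N := fun j => ⟨g j, hglt j⟩ with hG
  have hGinj : Function.Injective G := by
    intro a b hab
    by_contra hne
    have : e a ≠ e b := fun h => hne (heinj h)
    rcases this.lt_or_gt with h | h
    · exact absurd (congrArg Fin.val hab) (Nat.ne_of_lt (hmono _ _ h))
    · exact absurd (congrArg Fin.val hab).symm (Nat.ne_of_lt (hmono _ _ h))
  have hGbij : Function.Bijective G := Finite.injective_iff_bijective.mp hGinj
  set E := Equiv.ofBijective G hGbij with hE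
  have hcardE : (univ.filter fun j : Fin N => ((E j : Fin N) : ℕ) < k).card
      = (univ.filter fun m : Fin N => (m : ℕ) < k).card :=
    card_filter_comp_equiv' E (fun m : Fin N => (m : ℕ) < k)
  have hstep1 : k ≤ (univ.filter fun m : Fin N => (m : ℕ) < k).card := by
    have := Finset.card_le_card_of_injOn (fun m : Fin k => Fin.castLE hk m)
      (s := (univ : Finset (Fin k))) (t := univ.filter fun m : Fin N => (m : ℕ) < k)
      (fun a _ => by exact Finset.mem_filter.mpr ⟨Finset.mem_univ _, a.isLt⟩)
      (fun a _ b _ h => Fin.castLE_injective hk h)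
    simpa using this
  have hstep2 : (univ.filter fun m : Fin N => (m : ℕ) < k).card
      ≤ (univ.filter fun j : Fin N =>
        (univ.filter fun i => x i < x j).card < k).card := by
    rw [← hcardE]
    apply Finset.card_le_card
    intro j hj
    simp only [mem_filter, mem_univ, true_and] at hj ⊢
    have hfg : (univ.filter fun i => x i < x j).card ≤ g j := by
      apply Finset.card_le_card
      intro i hi
      simp only [mem_filter, mem_univ, true_and] at hi ⊢
      exact Prod.Lex.lt_iff.mpr (Or.inl hi)
    exact lt_of_le_of_lt hfg hj
  exact hstep1.trans hstep2

lemma le_conformalQuantile_iff {n : ℕ} {α : ℝ} (xs : Fin n → ℝ) (y : ℝ)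
    (hk1 : 1 ≤ (⌈(1 - α) * (n + 1 : ℝ)⌉).toNat) :
    ((y : EReal) ≤ conformalQuantile n α xs ↔
      (univ.filter fun i => xs i < y).card < (⌈(1 - α) * (n + 1 : ℝ)⌉).toNat) := by
  set k := (⌈(1 - α) * (n + 1 : ℝ)⌉).toNat with hk
  unfold conformalQuantile
  rw [sort_ofFn_eq]
  set σ := Tuple.sort xs with hσ
  have hcard : (univ.filter fun i => xs (σ i) < y).card
      = (univ.filter fun i => xs i < y).card :=
    card_filter_comp_equiv' σ (fun i => xs i < y)
  have hlen : ((List.ofFn (xs ∘ σ)).map (fun x : ℝ => (x : EReal))).length = n := by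
    simp
  by_cases hkn : k - 1 < n
  · rw [List.getD_eq_getElem _ _ (by rw [hlen]; exact hkn)]
    have hget : ((List.ofFn (xs ∘ σ)).map (fun x : ℝ => (x : EReal)))[k - 1]'(by
        rw [hlen]; exact hkn) = ((xs (σ ⟨k - 1, hkn⟩) : ℝ) : EReal) := by
      simp [List.getElem_map, List.getElem_ofFn]
    rw [hget, EReal.coe_le_coe_iff]
    have hmono : Monotone (fun i => xs (σ i)) := Tuple.monotone_sort xs
    rw [monotone_rank hmono ⟨k - 1, hkn⟩ y]
    rw [hcard]
    have hv : ((⟨k - 1, hkn⟩ : Fin n) : ℕ) = k - 1 := rfl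
    rw [hv]
    omega
  · rw [List.getD_eq_default _ _ (by rw [hlen]; omega)]
    have hle : (univ.filter fun i => xs i < y).card ≤ n := by
      simpa using Finset.card_filter_le (univ : Finset (Fin n)) (fun i => xs i < y)
    simp only [le_top, true_iff]
    omega

/-- Split conformal coverage: for exchangeable scores `s_1, …, s_n, s_{n+1}`, with `q̂`
the `⌈(1−α)(n+1)⌉`-th smallest of the first `n` scores, `Pr(s_{n+1} ≤ q̂) ≥ 1 − α`. -/
theorem split_conformal_coverage
    {Ω : Type*} [MeasureSpace Ω] [IsProbabilityMeasure (ℙ : Measure Ω)]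
    (n : ℕ) (hn : 0 < n) (α : ℝ) (hα : α ∈ Set.Ioo (0 : ℝ) 1)
    (s : Fin (n + 1) → Ω → ℝ) (hmeas : ∀ i, Measurable (s i))
    (hexch : ∀ σ : Equiv.Perm (Fin (n + 1)),
      Measure.map (fun ω i => s (σ i) ω) ℙ = Measure.map (fun ω i => s i ω) ℙ) :
    ENNReal.ofReal (1 - α) ≤
      ℙ {ω | (s (Fin.last n) ω : EReal) ≤
          conformalQuantile n α (fun i => s i.castSucc ω)} := by
  classical
  obtain ⟨hα0, hα1⟩ := hα
  set k := (⌈(1 - α) * (n + 1 : ℝ)⌉).toNat with hkdef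
  have h1α : (0 : ℝ) < 1 - α := by linarith
  have hceil_pos : 0 < ⌈(1 - α) * (n + 1 : ℝ)⌉ :=
    Int.ceil_pos.mpr (by positivity)
  have hk1 : 1 ≤ k := by rw [hkdef]; omega
  have hkn : k ≤ n + 1 := by
    have h1 : ⌈(1 - α) * (n + 1 : ℝ)⌉ ≤ (n + 1 : ℤ) := by
      apply Int.ceil_le.mpr
      push_cast
      nlinarith
    rw [hkdef]
    omega
  have hkreal : (1 - α) * (n + 1 : ℝ) ≤ (k : ℝ) := by
    have h := Int.le_ceil ((1 - α) * (n + 1 : ℝ))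
    have h2 : ((k : ℕ) : ℝ) = ((⌈(1 - α) * (n + 1 : ℝ)⌉ : ℤ) : ℝ) := by
      rw [hkdef]
      exact_mod_cast Int.toNat_of_nonneg hceil_pos.le
    linarith
  -- the score vector
  set T : Ω → (Fin (n + 1) → ℝ) := fun ω i => s i ω with hT
  have hTmeas : Measurable T := measurable_pi_lambda _ fun i => hmeas i
  -- rank events
  set B : Fin (n + 1) → Set (Fin (n + 1) → ℝ) :=
    fun j => {x | (univ.filter fun i => x i < x j).card < k} with hB
  have hBmeas : ∀ j, MeasurableSet (B j) := by
    intro j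
    have hF : Measurable fun x : Fin (n + 1) → ℝ =>
        (univ.filter fun i => x i < x j).card := by
      have hrw : (fun x : Fin (n + 1) → ℝ => (univ.filter fun i => x i < x j).card)
          = fun x => ∑ i : Fin (n + 1), if x i < x j then 1 else 0 := by
        funext x
        exact Finset.card_filter _ _
      rw [hrw]
      exact Finset.measurable_sum _ fun i _ =>
        Measurable.ite (measurableSet_lt (measurable_pi_apply i) (measurable_pi_apply j))
          measurable_const measurable_const
    exact hF measurableSet_Iio
  -- equal probabilities by exchangeability
  have hPA : ∀ j, ℙ (T ⁻¹' B j) = ℙ (T ⁻¹' B (Fin.last n)) := by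
    intro j
    set σ := Equiv.swap j (Fin.last n) with hσ
    have hσmeas : Measurable fun x : Fin (n + 1) → ℝ => x ∘ σ :=
      measurable_pi_lambda _ fun i => measurable_pi_apply (σ i)
    have hBswap : B j = (fun x : Fin (n + 1) → ℝ => x ∘ σ) ⁻¹' B (Fin.last n) := by
      ext x
      simp only [hB, Set.mem_preimage, Set.mem_setOf_eq, Function.comp_apply, hσ,
        Equiv.swap_apply_right]
      rw [card_filter_comp_equiv' (Equiv.swap j (Fin.last n)) (fun i => x i < x j)]
    calc ℙ (T ⁻¹' B j) = Measure.map T ℙ (B j) :=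
          (Measure.map_apply hTmeas (hBmeas j)).symm
      _ = Measure.map T ℙ ((fun x : Fin (n + 1) → ℝ => x ∘ σ) ⁻¹' B (Fin.last n)) := by
          rw [← hBswap]
      _ = Measure.map (fun x : Fin (n + 1) → ℝ => x ∘ σ) (Measure.map T ℙ)
            (B (Fin.last n)) := (Measure.map_apply hσmeas (hBmeas _)).symm
      _ = Measure.map ((fun x : Fin (n + 1) → ℝ => x ∘ σ) ∘ T) ℙ (B (Fin.last n)) := by
          rw [Measure.map_map hσmeas hTmeas]
      _ = Measure.map (fun ω i => s (σ i) ω) ℙ (B (Fin.last n)) := rfl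
      _ = Measure.map T ℙ (B (Fin.last n)) := by rw [hexch σ]
      _ = ℙ (T ⁻¹' B (Fin.last n)) := Measure.map_apply hTmeas (hBmeas _)
  -- counting bound
  have key : (k : ℝ≥0∞) ≤ (n + 1 : ℝ≥0∞) * ℙ (T ⁻¹' B (Fin.last n)) := by
    have hindmeas : ∀ j : Fin (n + 1),
        Measurable ((T ⁻¹' B j).indicator (fun _ => (1 : ℝ≥0∞))) :=
      fun j => measurable_const.indicator (hTmeas (hBmeas j))
    have hpt : ∀ ω, (k : ℝ≥0∞) ≤
        ∑ j : Fin (n + 1), (T ⁻¹' B j).indicator (fun _ => (1 : ℝ≥0∞)) ω := by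
      intro ω
      have hcount := rank_count (T ω) k hkn
      have hsum_eq : ∑ j : Fin (n + 1), (T ⁻¹' B j).indicator (fun _ => (1 : ℝ≥0∞)) ω
          = ((univ.filter fun j : Fin (n + 1) =>
              (univ.filter fun i => T ω i < T ω j).card < k).card : ℝ≥0∞) := by
        rw [Finset.card_filter]
        push_cast
        apply Finset.sum_congr rfl
        intro j _
        rw [Set.indicator_apply]
        have hmem : ω ∈ T ⁻¹' B j ↔ (univ.filter fun i => T ω i < T ω j).card < k :=
          Iff.rfl
        by_cases h : (univ.filter fun i => T ω i < T ω j).card < k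
        · rw [if_pos (hmem.mpr h), if_pos h]
        · rw [if_neg (fun hc => h (hmem.mp hc)), if_neg h]
      rw [hsum_eq]
      exact_mod_cast hcount
    calc (k : ℝ≥0∞) = ∫⁻ _, (k : ℝ≥0∞) ∂ℙ := by simp
      _ ≤ ∫⁻ ω, ∑ j : Fin (n + 1),
            (T ⁻¹' B j).indicator (fun _ => (1 : ℝ≥0∞)) ω ∂ℙ :=
          lintegral_mono fun ω => hpt ω
      _ = ∑ j : Fin (n + 1), ∫⁻ ω,
            (T ⁻¹' B j).indicator (fun _ => (1 : ℝ≥0∞)) ω ∂ℙ :=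
          lintegral_finset_sum _ fun j _ => hindmeas j
      _ = ∑ j : Fin (n + 1), ℙ (T ⁻¹' B j) := by
          refine Finset.sum_congr rfl fun j _ => ?_
          exact lintegral_indicator_one (hTmeas (hBmeas j))
      _ = ∑ _j : Fin (n + 1), ℙ (T ⁻¹' B (Fin.last n)) :=
          Finset.sum_congr rfl fun j _ => hPA j
      _ = (n + 1 : ℝ≥0∞) * ℙ (T ⁻¹' B (Fin.last n)) := by
          rw [Finset.sum_const, card_univ, Fintype.card_fin, nsmul_eq_mul]
          push_cast
          ring
  -- identify the event
  have hEq : {ω | (s (Fin.last n) ω : EReal) ≤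
      conformalQuantile n α (fun i => s i.castSucc ω)} = T ⁻¹' B (Fin.last n) := by
    ext ω
    simp only [Set.mem_setOf_eq, Set.mem_preimage, hB, hT]
    rw [le_conformalQuantile_iff (fun i => s i.castSucc ω) (s (Fin.last n) ω) hk1]
    have hcards : (univ.filter fun i : Fin (n + 1) => s i ω < s (Fin.last n) ω).card
        = (univ.filter fun i : Fin n => s i.castSucc ω < s (Fin.last n) ω).card := by
      rw [Finset.card_filter, Finset.card_filter, Fin.sum_univ_castSucc]
      simp
    rw [← hkdef, hcards]
  rw [hEq]
  -- conclude
  have hofReal : ENNReal.ofReal (1 - α) * ((n : ℝ≥0∞) + 1) ≤ (k : ℝ≥0∞) := by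
    have h1 : ENNReal.ofReal ((1 - α) * (n + 1 : ℝ)) ≤ ENNReal.ofReal (k : ℝ) :=
      ENNReal.ofReal_le_ofReal hkreal
    rw [ENNReal.ofReal_mul h1α.le, ENNReal.ofReal_natCast] at h1
    have h2 : ENNReal.ofReal ((n : ℝ) + 1) = (n : ℝ≥0∞) + 1 := by
      rw [ENNReal.ofReal_add (by positivity) zero_le_one]
      simp [ENNReal.ofReal_natCast]
    rwa [h2] at h1
  have hfinal : ENNReal.ofReal (1 - α) * ((n : ℝ≥0∞) + 1)
      ≤ ℙ (T ⁻¹' B (Fin.last n)) * ((n : ℝ≥0∞) + 1) := by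
    refine hofReal.trans ?_
    calc (k : ℝ≥0∞) ≤ (n + 1 : ℝ≥0∞) * ℙ (T ⁻¹' B (Fin.last n)) := key
      _ = ℙ (T ⁻¹' B (Fin.last n)) * ((n : ℝ≥0∞) + 1) := by ring
  exact (ENNReal.mul_le_mul_iff_left (lt_of_lt_of_le one_pos le_add_self).ne' (by simp)).mp hfinal
end

section
/- If scores s_1, …, s_{n+1} are exchangeable and almost surely distinct, then the rank of s_{n+1} among the n+1 scores is uniformly distributed on {1, …, n+1}. -/
open MeasureTheory ProbabilityTheory Finset

namespace RankAux

variable {n : ℕ}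

/-- Number of coordinates strictly below coordinate `k`. -/
noncomputable def cnt (x : Fin (n + 1) → ℝ) (k : Fin (n + 1)) : ℕ :=
  (Finset.univ.filter (fun i => x i < x k)).card

lemma cnt_eq_sum (x : Fin (n + 1) → ℝ) (k : Fin (n + 1)) :
    cnt x k = ∑ i, if x i < x k then 1 else 0 :=
  Finset.card_filter _ _

lemma cnt_le (x : Fin (n + 1) → ℝ) (k : Fin (n + 1)) : cnt x k ≤ n := by
  have hsub : Finset.univ.filter (fun i => x i < x k) ⊆ Finset.univ.erase k := by
    intro i hi
    simp only [mem_filter] at hi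
    exact mem_erase.2 ⟨fun h => absurd (h ▸ hi.2) (lt_irrefl _), mem_univ _⟩
  calc cnt x k ≤ (Finset.univ.erase k).card := card_le_card hsub
    _ = n := by rw [Finset.card_erase_of_mem (mem_univ _)]; simp

lemma cnt_lt_cnt {x : Fin (n + 1) → ℝ} {k k' : Fin (n + 1)} (hlt : x k < x k') :
    cnt x k < cnt x k' := by
  have hsub : Finset.univ.filter (fun i => x i < x k)
      ⊂ Finset.univ.filter (fun i => x i < x k') := by
    rw [Finset.ssubset_iff_of_subset
      (Finset.monotone_filter_right _ (fun i _ hi => hi.trans hlt))]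
    exact ⟨k, by simp [hlt], by simp⟩
  exact Finset.card_lt_card hsub

lemma cnt_inj {x : Fin (n + 1) → ℝ} (hx : Function.Injective x) :
    Function.Injective (cnt x) := by
  intro k k' h
  by_contra hne
  rcases lt_trichotomy (x k) (x k') with hlt | heq | hlt
  · exact absurd h (Nat.ne_of_lt (cnt_lt_cnt hlt))
  · exact hne (hx heq)
  · exact absurd h.symm (Nat.ne_of_lt (cnt_lt_cnt hlt))

lemma cnt_surj {x : Fin (n + 1) → ℝ} (hx : Function.Injective x)
    {m : ℕ} (hm : m ≤ n) : ∃ k, cnt x k = m := by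
  set g : Fin (n + 1) → Fin (n + 1) := fun k => ⟨cnt x k, Nat.lt_succ_of_le (cnt_le x k)⟩
  have hg : Function.Injective g := fun a b hab =>
    cnt_inj hx (by simpa [g, Fin.ext_iff] using hab)
  obtain ⟨k, hk⟩ := (Finite.injective_iff_surjective.1 hg) ⟨m, Nat.lt_succ_of_le hm⟩
  exact ⟨k, by simpa [g, Fin.ext_iff] using hk⟩

lemma cnt_measurable (k : Fin (n + 1)) : Measurable (fun x => cnt x k) := by
  simp only [cnt_eq_sum]
  refine Finset.measurable_sum _ (fun i _ => Measurable.ite ?_ measurable_const measurable_const)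
  exact measurableSet_lt (measurable_pi_apply i) (measurable_pi_apply k)

end RankAux

/-- If exchangeable scores `s_1, …, s_{n+1}` are almost surely distinct, then the rank
`1 + #{i ≤ n : s_i < s_{n+1}}` of `s_{n+1}` among the `n+1` scores is uniformly
distributed on `{1, …, n+1}`. -/
theorem rank_uniform_of_exchangeable
    {Ω : Type*} [MeasureSpace Ω] [IsProbabilityMeasure (ℙ : Measure Ω)]
    (n : ℕ) (hn : 0 < n)
    (s : Fin (n + 1) → Ω → ℝ) (hmeas : ∀ i, Measurable (s i))
    (hexch : ∀ σ : Equiv.Perm (Fin (n + 1)),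
      Measure.map (fun ω i => s (σ i) ω) ℙ = Measure.map (fun ω i => s i ω) ℙ)
    (hdistinct : ℙ {ω | ∃ i j : Fin (n + 1), i ≠ j ∧ s i ω = s j ω} = 0) :
    ∀ r : ℕ, 1 ≤ r → r ≤ n + 1 →
      ℙ {ω | 1 + (Finset.univ.filter
          (fun i : Fin n => s i.castSucc ω < s (Fin.last n) ω)).card = r}
        = (1 : ENNReal) / (n + 1) := by
  intro r hr1 hr2
  set X : Ω → (Fin (n + 1) → ℝ) := fun ω i => s i ω with hX
  have hXmeas : Measurable X := measurable_pi_lambda _ hmeas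
  set D : Set Ω := {ω | ∃ i j : Fin (n + 1), i ≠ j ∧ s i ω = s j ω} with hD
  set A : Fin (n + 1) → Set Ω := fun k => {ω | RankAux.cnt (X ω) k = r - 1} with hA
  have hAmeas : ∀ k, MeasurableSet (A k) := fun k =>
    ((RankAux.cnt_measurable k).comp hXmeas) (measurableSet_singleton (r - 1))
  -- injectivity of X ω off the bad set
  have hXinj : ∀ ω, ω ∉ D → Function.Injective (X ω) := by
    intro ω hω i j hij
    by_contra hne
    exact hω ⟨i, j, hne, hij⟩
  -- all A k have the same measure, via swap permutations
  have hAeq : ∀ k, ℙ (A k) = ℙ (A (Fin.last n)) := by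
    intro k
    have hσ := hexch (Equiv.swap k (Fin.last n))
    set σ := Equiv.swap k (Fin.last n) with hσdef
    have hYmeas : Measurable (fun ω i => s (σ i) ω) :=
      measurable_pi_lambda _ (fun i => hmeas (σ i))
    have hSmeas : MeasurableSet {x : Fin (n + 1) → ℝ | RankAux.cnt x (Fin.last n) = r - 1} :=
      (RankAux.cnt_measurable (Fin.last n)) (measurableSet_singleton (r - 1))
    have h1 : ℙ ((fun ω i => s (σ i) ω) ⁻¹' {x | RankAux.cnt x (Fin.last n) = r - 1})
        = ℙ (X ⁻¹' {x | RankAux.cnt x (Fin.last n) = r - 1}) := by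
      rw [← Measure.map_apply hYmeas hSmeas, ← Measure.map_apply hXmeas hSmeas, hσ]
    have h2 : (fun ω i => s (σ i) ω) ⁻¹' {x | RankAux.cnt x (Fin.last n) = r - 1} = A k := by
      ext ω
      simp only [Set.mem_preimage, Set.mem_setOf_eq, hA, RankAux.cnt_eq_sum]
      have hlast : σ (Fin.last n) = k := Equiv.swap_apply_right _ _
      have hsum : (∑ i, if s (σ i) ω < s (σ (Fin.last n)) ω then 1 else 0)
          = ∑ i, if s i ω < s k ω then 1 else 0 := by
        simp only [hlast]
        exact Equiv.sum_comp σ (fun i => if s i ω < s k ω then 1 else 0)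
      rw [hsum]
    have h3 : X ⁻¹' {x | RankAux.cnt x (Fin.last n) = r - 1} = A (Fin.last n) := rfl
    rw [h2, h3] at h1
    exact h1
  -- the A k are a.e. disjoint
  have hdisj : Pairwise (Function.onFun (MeasureTheory.AEDisjoint ℙ) A) := by
    intro k k' hkk'
    refine measure_mono_null (fun ω hω => ?_) hdistinct
    by_contra hωD
    rcases hω with ⟨h1, h2⟩
    exact hkk' (RankAux.cnt_inj (hXinj ω hωD) (h1.trans h2.symm))
  -- the A k cover a.e.
  have hcover : ℙ (⋃ k, A k) = 1 := by
    have hcompl : (⋃ k, A k)ᶜ ⊆ D := by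
      intro ω hω
      by_contra hωD
      obtain ⟨k, hk⟩ := RankAux.cnt_surj (hXinj ω hωD) (Nat.sub_le_of_le_add (by omega : r ≤ n + 1))
      exact hω (Set.mem_iUnion.2 ⟨k, hk⟩)
    have h0 : ℙ ((⋃ k, A k)ᶜ) = 0 := measure_mono_null hcompl hdistinct
    have hc := measure_compl (MeasurableSet.iUnion hAmeas) (measure_ne_top ℙ _)
    rw [h0, measure_univ] at hc
    have hle : ℙ (⋃ k, A k) ≤ 1 := prob_le_one
    exact le_antisymm hle (tsub_eq_zero_iff_le.1 hc.symm)
  -- sum up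
  have hsum : ∑ k : Fin (n + 1), ℙ (A k) = 1 := by
    rw [← hcover, measure_iUnion₀ hdisj (fun k => (hAmeas k).nullMeasurableSet), tsum_fintype]
  have hsum' : ((n : ENNReal) + 1) * ℙ (A (Fin.last n)) = 1 := by
    calc ((n : ENNReal) + 1) * ℙ (A (Fin.last n))
        = ∑ _k : Fin (n + 1), ℙ (A (Fin.last n)) := by
          rw [Finset.sum_const, Finset.card_univ, Fintype.card_fin, nsmul_eq_mul]
          push_cast
          ring
      _ = ∑ k : Fin (n + 1), ℙ (A k) := Finset.sum_congr rfl (fun k _ => (hAeq k).symm)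
      _ = 1 := hsum
  have hne : ((n : ENNReal) + 1) ≠ 0 := by simp
  have htop : ((n : ENNReal) + 1) ≠ ⊤ := by simp
  have hfinal : ℙ (A (Fin.last n)) = 1 / ((n : ENNReal) + 1) :=
    (ENNReal.eq_div_iff hne htop).2 hsum'
  -- identify the event with A (last n)
  have hevent : {ω | 1 + (Finset.univ.filter
      (fun i : Fin n => s i.castSucc ω < s (Fin.last n) ω)).card = r} = A (Fin.last n) := by
    ext ω
    simp only [Set.mem_setOf_eq, hA, RankAux.cnt_eq_sum]
    have hcard : (Finset.univ.filter
        (fun i : Fin n => s i.castSucc ω < s (Fin.last n) ω)).card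
        = ∑ i : Fin n, if s i.castSucc ω < s (Fin.last n) ω then 1 else 0 :=
      Finset.card_filter _ _
    have hsplit : (∑ i : Fin (n + 1), if X ω i < X ω (Fin.last n) then 1 else 0)
        = ∑ i : Fin n, if s i.castSucc ω < s (Fin.last n) ω then 1 else 0 := by
      rw [Fin.sum_univ_castSucc]
      have : (if X ω (Fin.last n) < X ω (Fin.last n) then 1 else 0) = 0 :=
        if_neg (lt_irrefl _)
      rw [this, add_zero]
    rw [hcard, hsplit]
    omega
  rw [hevent, hfinal]
end
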